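/- Let X be a real random variable with E[X] = 0 whose law F has a component p_1·F_1 with p_1 > 0, where F_1 is a probability measure supported on a compact interval [a_1, a_2] with a_1 < a_2, absolutely continuous with density bounded away from 0 on [a_1, a_2]. Then there exist a positive integer m, a constant p > 0, a compact interval [a, b] with a < 0 < b, a constant c > 0, and a probability measure ν supported on [a, b], absolutely continuous with density ≥ c on [a, b], satisfying ∫ x dν(x) = 0, such that the m-fold convolution F^{*m} (the law of the sum of m i.i.d. copies of X) satisfies F^{*m} ≥ p·ν as measures. -/

import Mathlib

open MeasureTheory
open scoped ENNReal

namespace CCaux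

noncomputable def conv (μ ν : Measure ℝ) : Measure ℝ :=
  Measure.map (fun p : ℝ × ℝ => p.1 + p.2) (μ.prod ν)

lemma conv_apply (μ ν : Measure ℝ) [SFinite ν] {A : Set ℝ} (hA : MeasurableSet A) :
    conv μ ν A = ∫⁻ x, ν {y | x + y ∈ A} ∂μ := by
  rw [conv, Measure.map_apply (by fun_prop) hA, Measure.prod_apply (measurable_add hA)]
  rfl

lemma conv_mono {μ₁ μ₂ ν₁ ν₂ : Measure ℝ} [SFinite ν₁] [SFinite ν₂]
    (h1 : μ₁ ≤ μ₂) (h2 : ν₁ ≤ ν₂) : conv μ₁ ν₁ ≤ conv μ₂ ν₂ := by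
  rw [Measure.le_iff]
  intro A hA
  rw [conv_apply _ _ hA, conv_apply _ _ hA]
  exact lintegral_mono' h1 fun x => Measure.le_iff'.1 h2 _

lemma conv_smul_left (c : ℝ≥0∞) (μ ν : Measure ℝ) [SFinite ν] :
    conv (c • μ) ν = c • conv μ ν := by
  ext A hA
  rw [Measure.smul_apply, conv_apply _ _ hA, conv_apply _ _ hA, lintegral_smul_measure]

lemma conv_smul_right (c : ℝ≥0∞) (hc : c ≠ ∞) (μ ν : Measure ℝ) [SFinite ν] :
    conv μ (c • ν) = c • conv μ ν := by
  ext A hA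
  rw [Measure.smul_apply, conv_apply _ _ hA, conv_apply _ _ hA]
  simp only [Measure.smul_apply, smul_eq_mul]
  rw [lintegral_const_mul' _ _ hc]

lemma conv_dirac_right (μ : Measure ℝ) [SFinite μ] : conv μ (Measure.dirac 0) = μ := by
  rw [conv, Measure.prod_dirac, Measure.map_map (by fun_prop) (by fun_prop)]
  have : ((fun p : ℝ × ℝ => p.1 + p.2) ∘ fun x : ℝ => (x, (0:ℝ))) = id := by
    funext x; simp
  rw [this, Measure.map_id]

instance conv_prob (μ ν : Measure ℝ) [IsProbabilityMeasure μ] [IsProbabilityMeasure ν] :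
    IsProbabilityMeasure (conv μ ν) := by
  constructor
  rw [conv_apply _ _ MeasurableSet.univ]
  simp

noncomputable def Sm (F : Measure ℝ) (n : ℕ) : Measure ℝ :=
  Measure.map (fun ω : Fin n → ℝ => ∑ i, ω i) (Measure.pi fun _ : Fin n => F)

lemma Sm_zero (F : Measure ℝ) : Sm F 0 = Measure.dirac 0 := by
  rw [Sm, Measure.pi_of_empty, Measure.map_dirac' (by fun_prop)]
  simp

lemma Sm_succ (F : Measure ℝ) [IsProbabilityMeasure F] (n : ℕ) :
    Sm F (n + 1) = conv F (Sm F n) := by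
  have hmp := measurePreserving_piFinSuccAbove (fun _ : Fin (n+1) => F) 0
  have hpi : (Measure.pi fun _ : Fin (n+1) => F)
      = Measure.map (MeasurableEquiv.piFinSuccAbove (fun _ : Fin (n+1) => ℝ) 0).symm
        (F.prod (Measure.pi fun _ : Fin n => F)) := by
    rw [← hmp.map_eq, Measure.map_map (MeasurableEquiv.measurable _)
      (MeasurableEquiv.measurable _)]
    simp
  rw [Sm, hpi, Measure.map_map (by fun_prop) (MeasurableEquiv.measurable _)]
  have hfun : ((fun ω : Fin (n+1) → ℝ => ∑ i, ω i) ∘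
      (MeasurableEquiv.piFinSuccAbove (fun _ : Fin (n+1) => ℝ) 0).symm)
      = fun p : ℝ × (Fin n → ℝ) => p.1 + ∑ i, p.2 i := by
    funext p
    simp [MeasurableEquiv.piFinSuccAbove, Fin.insertNthEquiv, Fin.sum_univ_succ]
  rw [hfun, conv, Sm]
  have := Measure.map_prod_map (f := (id : ℝ → ℝ)) (g := fun ω : Fin n → ℝ => ∑ i, ω i)
    F (Measure.pi fun _ : Fin n => F) measurable_id (by fun_prop)
  rw [Measure.map_id] at this
  rw [this, Measure.map_map (by fun_prop) (by fun_prop)]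
  rfl


instance Sm_prob (F : Measure ℝ) [IsProbabilityMeasure F] (n : ℕ) :
    IsProbabilityMeasure (Sm F n) :=
  Measure.isProbabilityMeasure_map (by fun_prop)

noncomputable def convPow (μ : Measure ℝ) : ℕ → Measure ℝ → Measure ℝ
  | 0, ν => ν
  | n + 1, ν => conv μ (convPow μ n ν)

instance convPow_prob (μ ν : Measure ℝ) [IsProbabilityMeasure μ] [IsProbabilityMeasure ν]
    (n : ℕ) : IsProbabilityMeasure (convPow μ n ν) := by
  induction n with
  | zero => exact ‹_›
  | succ n ih => exact conv_prob μ _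

lemma chain (F : Measure ℝ) [IsProbabilityMeasure F] (ν : Measure ℝ) [IsProbabilityMeasure ν]
    (cc : ℝ≥0∞) (hcc : cc ≠ ∞) (hle : cc • ν ≤ F)
    (μ : Measure ℝ) [IsProbabilityMeasure μ] (c : ℝ≥0∞) (hc : c ≠ ∞) (n : ℕ)
    (h : c • μ ≤ Sm F n) :
    ∀ k : ℕ, (cc ^ k * c) • convPow ν k μ ≤ Sm F (k + n) := by
  intro k
  induction k with
  | zero => simpa [convPow] using h
  | succ k ih =>
    have : k + 1 + n = (k + n) + 1 := by ring
    rw [this, Sm_succ]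
    calc (cc ^ (k+1) * c) • convPow ν (k+1) μ
        = (cc ^ (k+1) * c) • conv ν (convPow ν k μ) := rfl
      _ = cc • ((cc ^ k * c) • conv ν (convPow ν k μ)) := by
          rw [smul_smul, pow_succ, mul_comm (cc ^ k) cc, mul_assoc]
      _ = conv (cc • ν) ((cc ^ k * c) • convPow ν k μ) := by
          rw [conv_smul_left, conv_smul_right _ (by
            exact ENNReal.mul_ne_top (ENNReal.pow_ne_top hcc) hc), smul_comm]
      _ ≤ conv F (Sm F (k + n)) := conv_mono hle ih


lemma core_bound (γ₁ γ₂ h : ℝ) {A : Set ℝ} (hA : MeasurableSet A) :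
    ENNReal.ofReal h * volume (A ∩ Set.Icc (γ₁+γ₂-h) (γ₁+γ₂+h)) ≤
      ∫⁻ x, (volume.restrict (Set.Icc (γ₂-h) (γ₂+h))) {y | x + y ∈ A}
        ∂(volume.restrict (Set.Icc (γ₁-h) (γ₁+h))) := by
  set I := Set.Icc (γ₁-h) (γ₁+h) with hI
  set I' := Set.Icc (γ₂-h) (γ₂+h) with hI'
  set W := Set.Icc (γ₁+γ₂-h) (γ₁+γ₂+h) with hW
  have hImeas : MeasurableSet I := measurableSet_Icc
  have hI'meas : MeasurableSet I' := measurableSet_Icc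
  have hWmeas : MeasurableSet W := measurableSet_Icc
  set f : ℝ → ℝ → ℝ≥0∞ := fun x z => A.indicator 1 z * I'.indicator 1 (z - x) with hf
  have step1 : ∀ x : ℝ, (volume.restrict I') {y | x + y ∈ A} = ∫⁻ z, f x z ∂volume := by
    intro x
    have hset : MeasurableSet {y : ℝ | x + y ∈ A} := measurable_const_add x hA
    rw [Measure.restrict_apply hset]
    have heq : ∀ y : ℝ, ({y | x + y ∈ A} ∩ I').indicator (1 : ℝ → ℝ≥0∞) y = f x (x + y) := by
      intro y
      simp only [hf, Set.indicator, Set.mem_inter_iff, Set.mem_setOf_eq, add_sub_cancel_left]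
      by_cases h1 : x + y ∈ A <;> by_cases h2 : y ∈ I' <;> simp [h1, h2]
    rw [← lintegral_indicator_one (hset.inter hI'meas)]
    calc ∫⁻ y, ({y | x + y ∈ A} ∩ I').indicator 1 y ∂volume
        = ∫⁻ y, f x (x + y) ∂volume := by simp_rw [heq]
      _ = ∫⁻ z, f x z ∂volume := lintegral_add_left_eq_self (f x) x
  calc ENNReal.ofReal h * volume (A ∩ W)
      = ∫⁻ z, (A ∩ W).indicator 1 z * ENNReal.ofReal h ∂volume := by
        rw [mul_comm, ← lintegral_indicator_one (hA.inter hWmeas),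
          ← lintegral_mul_const' _ _ ENNReal.ofReal_ne_top]
    _ ≤ ∫⁻ z, A.indicator 1 z * volume (I ∩ {x | z - x ∈ I'}) ∂volume := by
        apply lintegral_mono
        intro z
        by_cases hz : z ∈ A
        · by_cases hzW : z ∈ W
          · simp only [Set.indicator_of_mem (Set.mem_inter hz hzW), Set.indicator_of_mem hz,
              Pi.one_apply, one_mul]
            have hseteq : I ∩ {x | z - x ∈ I'}
                = Set.Icc (max (γ₁-h) (z-(γ₂+h))) (min (γ₁+h) (z-(γ₂-h))) := by
              ext x
              simp only [hI, hI', Set.mem_inter_iff, Set.mem_Icc, Set.mem_setOf_eq,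
                max_le_iff, le_min_iff]
              constructor
              · rintro ⟨⟨h1, h2⟩, h3, h4⟩
                exact ⟨⟨h1, by linarith⟩, h2, by linarith⟩
              · rintro ⟨⟨h1, h2⟩, h3, h4⟩
                exact ⟨⟨h1, h3⟩, by linarith, by linarith⟩
            rw [hseteq, Real.volume_Icc]
            apply ENNReal.ofReal_le_ofReal
            have hzW' : γ₁ + γ₂ - h ≤ z ∧ z ≤ γ₁ + γ₂ + h := by rwa [hW, Set.mem_Icc] at hzW
            rw [max_def, min_def]
            split_ifs <;> linarith [hzW'.1, hzW'.2]
          · have h0 : (A ∩ W).indicator (1 : ℝ → ℝ≥0∞) z = 0 :=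
              Set.indicator_of_notMem (fun hm : z ∈ A ∩ W => hzW hm.2) _
            simp [h0]
        · have h0 : (A ∩ W).indicator (1 : ℝ → ℝ≥0∞) z = 0 :=
            Set.indicator_of_notMem (fun hm : z ∈ A ∩ W => hz hm.1) _
          simp [h0]
    _ = ∫⁻ z, ∫⁻ x, I.indicator 1 x * f x z ∂volume ∂volume := by
        apply lintegral_congr
        intro z
        have hmeasIx : MeasurableSet (I ∩ {x : ℝ | z - x ∈ I'}) :=
          hImeas.inter (measurable_const_sub z hI'meas)
        have hvol : volume (I ∩ {x : ℝ | z - x ∈ I'})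
            = ∫⁻ x, (I ∩ {x : ℝ | z - x ∈ I'}).indicator 1 x ∂volume :=
          (lintegral_indicator_one hmeasIx).symm
        rw [hf]
        by_cases hz : z ∈ A
        · simp only [Set.indicator_of_mem hz, Pi.one_apply, one_mul, hvol]
          apply lintegral_congr
          intro x
          by_cases h1 : x ∈ I <;> by_cases h2 : z - x ∈ I' <;>
            simp [Set.indicator, h1, h2]
        · simp [Set.indicator_of_notMem hz]
    _ = ∫⁻ x, ∫⁻ z, I.indicator 1 x * f x z ∂volume ∂volume := by
        rw [lintegral_lintegral_swap]
        apply Measurable.aemeasurable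
        apply Measurable.mul
        · exact (measurable_const.indicator hImeas).comp measurable_snd
        · apply Measurable.mul
          · exact (measurable_const.indicator hA).comp measurable_fst
          · exact (measurable_const.indicator hI'meas).comp (measurable_fst.sub measurable_snd)
    _ = ∫⁻ x, I.indicator (fun x => ∫⁻ z, f x z ∂volume) x ∂volume := by
        apply lintegral_congr
        intro x
        by_cases hx : x ∈ I <;> simp [hx]
    _ = ∫⁻ x, (volume.restrict I') {y | x + y ∈ A} ∂(volume.restrict I) := by
        rw [lintegral_indicator hImeas]
        exact lintegral_congr fun x => (step1 x).symm

-- restrict-restrict convolution lower bound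
lemma conv_Icc_Icc (γ₁ γ₂ h : ℝ) :
    ENNReal.ofReal h • volume.restrict (Set.Icc (γ₁+γ₂-h) (γ₁+γ₂+h)) ≤
      conv (volume.restrict (Set.Icc (γ₁-h) (γ₁+h))) (volume.restrict (Set.Icc (γ₂-h) (γ₂+h))) := by
  rw [Measure.le_iff]
  intro A hA
  rw [conv_apply _ _ hA, Measure.smul_apply, smul_eq_mul,
    Measure.restrict_apply hA]
  exact core_bound γ₁ γ₂ h hA

-- shift lemma: convolving on the left with a measure concentrated near t
lemma conv_shift (ρ : Measure ℝ) [SFinite ρ] (t η : ℝ)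
    (hρ : ρ (Set.Icc (t-η) (t+η)) = 1) (lo hi : ℝ) (c : ℝ≥0∞) (μ : Measure ℝ) [SFinite μ]
    (hμ : c • volume.restrict (Set.Icc lo hi) ≤ μ) :
    c • volume.restrict (Set.Icc (lo + t + η) (hi + t - η)) ≤ conv ρ μ := by
  have step : c • volume.restrict (Set.Icc (lo + t + η) (hi + t - η)) ≤
      conv ρ (c • volume.restrict (Set.Icc lo hi)) := by
    rw [Measure.le_iff]
    intro A hA
    rw [conv_apply _ _ hA]
    have key : ∀ y ∈ Set.Icc (t-η) (t+η),
        (c • volume.restrict (Set.Icc lo hi)) {x | y + x ∈ A}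
          ≥ c * volume (A ∩ Set.Icc (lo + t + η) (hi + t - η)) := by
      intro y hy
      rw [Set.mem_Icc] at hy
      have hset : MeasurableSet {x : ℝ | y + x ∈ A} := measurable_const_add y hA
      rw [Measure.smul_apply, smul_eq_mul, Measure.restrict_apply hset]
      apply mul_le_mul_right
      have hsub : (fun x : ℝ => y + x) ⁻¹' (A ∩ Set.Icc (lo + t + η) (hi + t - η)) ⊆
          {x : ℝ | y + x ∈ A} ∩ Set.Icc lo hi := by
        intro x hx
        simp only [Set.mem_preimage, Set.mem_inter_iff, Set.mem_Icc] at hx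
        obtain ⟨hx1, hx2, hx3⟩ := hx
        exact ⟨hx1, Set.mem_Icc.2 ⟨by linarith [hy.1, hy.2], by linarith [hy.1, hy.2]⟩⟩
      calc volume (A ∩ Set.Icc (lo + t + η) (hi + t - η))
          = volume ((fun x : ℝ => y + x) ⁻¹' (A ∩ Set.Icc (lo + t + η) (hi + t - η))) :=
            (measure_preimage_add volume y _).symm
        _ ≤ volume ({x : ℝ | y + x ∈ A} ∩ Set.Icc lo hi) := measure_mono hsub
    calc (c • volume.restrict (Set.Icc (lo + t + η) (hi + t - η))) A
        = c * volume (A ∩ Set.Icc (lo + t + η) (hi + t - η)) := by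
          rw [Measure.smul_apply, smul_eq_mul, Measure.restrict_apply hA]
      _ = ∫⁻ y in Set.Icc (t-η) (t+η),
            c * volume (A ∩ Set.Icc (lo + t + η) (hi + t - η)) ∂ρ := by
          rw [setLIntegral_const, hρ, mul_one]
      _ ≤ ∫⁻ y in Set.Icc (t-η) (t+η),
            (c • volume.restrict (Set.Icc lo hi)) {x | y + x ∈ A} ∂ρ := by
          exact setLIntegral_mono' measurableSet_Icc key
      _ ≤ ∫⁻ y, (c • volume.restrict (Set.Icc lo hi)) {x | y + x ∈ A} ∂ρ :=
          lintegral_mono' Measure.restrict_le_self (le_refl _)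
  exact le_trans step (conv_mono (le_refl ρ) hμ)

lemma smul_mono_meas {c : ℝ≥0∞} {μ ν : Measure ℝ} (h : μ ≤ ν) : c • μ ≤ c • ν := by
  rw [Measure.le_iff']
  intro s
  simp only [Measure.smul_apply, smul_eq_mul]
  exact mul_le_mul_right (Measure.le_iff'.1 h s) c

lemma smul_mono_const {a b : ℝ≥0∞} (hab : a ≤ b) (μ : Measure ℝ) : a • μ ≤ b • μ := by
  rw [Measure.le_iff']
  intro s
  simp only [Measure.smul_apply, smul_eq_mul]
  exact mul_le_mul_left hab _

lemma Icc_eq {a b a' b' : ℝ} (h1 : a = a') (h2 : b = b') : Set.Icc a b = Set.Icc a' b' := by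
  rw [h1, h2]

lemma window (F₁ : Measure ℝ) [IsProbabilityMeasure F₁] (γ h : ℝ) (c₁ : ℝ≥0∞)
    (hfin : c₁ ≠ ∞)
    (hbase : c₁ • volume.restrict (Set.Icc (γ-h) (γ+h)) ≤ F₁) :
    ∀ K : ℕ, (c₁ ^ (K+2) * (ENNReal.ofReal h) ^ (K+1)) •
        volume.restrict (Set.Icc (((K:ℝ)+2)*γ - h) (((K:ℝ)+2)*γ + h))
      ≤ convPow F₁ (K+2) (Measure.dirac 0) := by
  intro K
  induction K with
  | zero =>
    have h2 : convPow F₁ 2 (Measure.dirac 0) = conv F₁ F₁ := by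
      show conv F₁ (conv F₁ (convPow F₁ 0 (Measure.dirac 0))) = conv F₁ F₁
      rw [show convPow F₁ 0 (Measure.dirac 0) = Measure.dirac 0 from rfl, conv_dirac_right]
    rw [h2]
    calc (c₁ ^ (0+2) * ENNReal.ofReal h ^ (0+1)) •
          volume.restrict (Set.Icc ((((0:ℕ):ℝ)+2)*γ - h) ((((0:ℕ):ℝ)+2)*γ + h))
        = (c₁ * c₁) • (ENNReal.ofReal h • volume.restrict (Set.Icc (γ+γ-h) (γ+γ+h))) := by
          rw [smul_smul, Icc_eq (a' := γ+γ-h) (b' := γ+γ+h) (by push_cast; ring)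
            (by push_cast; ring)]
          congr 1
          ring
      _ ≤ (c₁ * c₁) • conv (volume.restrict (Set.Icc (γ-h) (γ+h)))
            (volume.restrict (Set.Icc (γ-h) (γ+h))) :=
          smul_mono_meas (conv_Icc_Icc γ γ h)
      _ = conv (c₁ • volume.restrict (Set.Icc (γ-h) (γ+h)))
            (c₁ • volume.restrict (Set.Icc (γ-h) (γ+h))) := by
          rw [conv_smul_left, conv_smul_right _ hfin, smul_smul]
      _ ≤ conv F₁ F₁ := conv_mono hbase hbase
  | succ K ih =>
    have hd : c₁ ^ (K+2) * (ENNReal.ofReal h) ^ (K+1) ≠ ∞ :=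
      ENNReal.mul_ne_top (ENNReal.pow_ne_top hfin)
        (ENNReal.pow_ne_top ENNReal.ofReal_ne_top)
    calc (c₁ ^ (K+1+2) * ENNReal.ofReal h ^ (K+1+1)) •
          volume.restrict (Set.Icc ((((K+1:ℕ):ℝ)+2)*γ - h) ((((K+1:ℕ):ℝ)+2)*γ + h))
        = (c₁ * (c₁ ^ (K+2) * ENNReal.ofReal h ^ (K+1))) • (ENNReal.ofReal h •
            volume.restrict (Set.Icc (γ + ((((K:ℕ):ℝ)+2)*γ) - h) (γ + ((((K:ℕ):ℝ)+2)*γ) + h))) := by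
          rw [smul_smul, Icc_eq (a' := γ + ((((K:ℕ):ℝ)+2)*γ) - h)
            (b' := γ + ((((K:ℕ):ℝ)+2)*γ) + h) (by push_cast; ring) (by push_cast; ring)]
          congr 1
          ring
      _ ≤ (c₁ * (c₁ ^ (K+2) * ENNReal.ofReal h ^ (K+1))) •
            conv (volume.restrict (Set.Icc (γ-h) (γ+h)))
              (volume.restrict (Set.Icc (((((K:ℕ):ℝ)+2)*γ) - h) (((((K:ℕ):ℝ)+2)*γ) + h))) :=
          smul_mono_meas (conv_Icc_Icc γ ((((K:ℕ):ℝ)+2)*γ) h)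
      _ = conv (c₁ • volume.restrict (Set.Icc (γ-h) (γ+h)))
            ((c₁ ^ (K+2) * ENNReal.ofReal h ^ (K+1)) •
              volume.restrict (Set.Icc (((((K:ℕ):ℝ)+2)*γ) - h) (((((K:ℕ):ℝ)+2)*γ) + h))) := by
          rw [conv_smul_left, conv_smul_right _ hd, smul_smul]
      _ ≤ conv F₁ (convPow F₁ (K+2) (Measure.dirac 0)) := conv_mono hbase ih
      _ = convPow F₁ (K+1+2) (Measure.dirac 0) := rfl

instance conv_sfinite (μ ν : Measure ℝ) [SFinite μ] [SFinite ν] : SFinite (conv μ ν) := by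
  unfold conv; infer_instance

instance convPow_sfinite (μ : Measure ℝ) [SFinite μ] (n : ℕ) (ν : Measure ℝ) [SFinite ν] :
    SFinite (convPow μ n ν) := by
  induction n with
  | zero => exact ‹_›
  | succ n ih => exact conv_sfinite μ _

lemma shift_chain (ρ : Measure ℝ) [IsProbabilityMeasure ρ] (t η : ℝ)
    (hρ : ρ (Set.Icc (t-η) (t+η)) = 1) (μ₀ : Measure ℝ) [SFinite μ₀]
    (c : ℝ≥0∞) (lo hi : ℝ) (h₀ : c • volume.restrict (Set.Icc lo hi) ≤ μ₀) :
    ∀ j : ℕ, c • volume.restrict (Set.Icc (lo + j*(t+η)) (hi + j*(t-η))) ≤ convPow ρ j μ₀ := by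
  intro j
  induction j with
  | zero => simpa [convPow] using h₀
  | succ j ih =>
    have := conv_shift ρ t η hρ (lo + j*(t+η)) (hi + j*(t-η)) c (convPow ρ j μ₀) ih
    calc c • volume.restrict (Set.Icc (lo + (j+1:ℕ)*(t+η)) (hi + (j+1:ℕ)*(t-η)))
        = c • volume.restrict (Set.Icc ((lo + j*(t+η)) + t + η) ((hi + j*(t-η)) + t - η)) := by
          rw [Icc_eq (a' := (lo + j*(t+η)) + t + η) (b' := (hi + j*(t-η)) + t - η)
            (by push_cast; ring) (by push_cast; ring)]
      _ ≤ conv ρ (convPow ρ j μ₀) := this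
      _ = convPow ρ (j+1) μ₀ := rfl


lemma exists_support_point (ν : Measure ℝ) [IsFiniteMeasure ν] (hpos : 0 < ν (Set.Iio 0)) :
    ∃ t : ℝ, t < 0 ∧ ∀ η > 0, 0 < ν (Set.Icc (t-η) (t+η)) := by
  -- find ε = 1/(n+1) with ν (Iic (-ε)) > 0
  have h1 : ∃ n : ℕ, 0 < ν (Set.Iic (-(1/(n+1) : ℝ))) := by
    by_contra hcon
    push_neg at hcon
    have hz : ∀ n : ℕ, ν (Set.Iic (-(1/(n+1) : ℝ))) = 0 :=
      fun n => le_antisymm (hcon n) (zero_le)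
    have hsub : Set.Iio (0:ℝ) ⊆ ⋃ n : ℕ, Set.Iic (-(1/(n+1) : ℝ)) := by
      intro x hx
      rw [Set.mem_Iio] at hx
      obtain ⟨n, hn⟩ := exists_nat_one_div_lt (show (0:ℝ) < -x by linarith)
      exact Set.mem_iUnion.2 ⟨n, by simp only [Set.mem_Iic]; linarith⟩
    have := measure_mono (μ := ν) hsub
    rw [measure_iUnion_null hz] at this
    exact absurd (le_antisymm (this.trans (by simp)) (zero_le)) (ne_of_gt hpos)
  obtain ⟨n, hn⟩ := h1
  set εr : ℝ := 1/(n+1) with hεr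
  have hεrpos : 0 < εr := by positivity
  -- find M with ν (Icc (-M) (-εr)) > 0
  have h2 : ∃ M : ℕ, 0 < ν (Set.Icc (-(M:ℝ)) (-εr)) := by
    by_contra hcon
    push_neg at hcon
    have hz : ∀ M : ℕ, ν (Set.Icc (-(M:ℝ)) (-εr)) = 0 :=
      fun M => le_antisymm (hcon M) (zero_le)
    have hsub : Set.Iic (-εr) ⊆ ⋃ M : ℕ, Set.Icc (-(M:ℝ)) (-εr) := by
      intro x hx
      rw [Set.mem_Iic] at hx
      obtain ⟨M, hM⟩ := exists_nat_ge (-x)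
      exact Set.mem_iUnion.2 ⟨M, Set.mem_Icc.2 ⟨by linarith, hx⟩⟩
    have := measure_mono (μ := ν) hsub
    rw [measure_iUnion_null hz] at this
    exact absurd (le_antisymm (this.trans (by simp)) (zero_le)) (ne_of_gt hn)
  obtain ⟨M, hM⟩ := h2
  set μ' := ν.restrict (Set.Icc (-(M:ℝ)) (-εr)) with hμ'
  set S : Set ℝ := {x | 0 < μ' (Set.Iic x)} with hS
  have hSup : ∀ x ∈ S, ∀ y, x ≤ y → y ∈ S := by
    intro x hx y hxy
    exact lt_of_lt_of_le hx (measure_mono (Set.Iic_subset_Iic.2 hxy))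
  have hSne : S.Nonempty := by
    refine ⟨-εr, ?_⟩
    have : μ' (Set.Iic (-εr)) = ν (Set.Icc (-(M:ℝ)) (-εr)) := by
      rw [hμ', Measure.restrict_apply measurableSet_Iic,
        Set.inter_eq_self_of_subset_right (fun y hy => Set.mem_Iic.2 (Set.mem_Icc.1 hy).2)]
    rw [hS, Set.mem_setOf_eq, this]
    exact hM
  have hSbdd : BddBelow S := by
    refine ⟨-(M:ℝ)-1, fun x hx => ?_⟩
    by_contra hlt
    push_neg at hlt
    have hempty : Set.Iic x ∩ Set.Icc (-(M:ℝ)) (-εr) = ∅ := by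
      ext y
      simp only [Set.mem_inter_iff, Set.mem_Iic, Set.mem_Icc, Set.mem_empty_iff_false,
        iff_false, not_and]
      intro h1 h2
      linarith
    have : μ' (Set.Iic x) = 0 := by
      rw [hμ', Measure.restrict_apply measurableSet_Iic, hempty, measure_empty]
    rw [hS, Set.mem_setOf_eq, this] at hx
    exact lt_irrefl _ hx
  set t := sInf S with ht
  have htle : t ≤ -εr := csInf_le hSbdd hSne.choose_spec |> fun _ => csInf_le hSbdd (by
    have : μ' (Set.Iic (-εr)) = ν (Set.Icc (-(M:ℝ)) (-εr)) := by
      rw [hμ', Measure.restrict_apply measurableSet_Iic,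
        Set.inter_eq_self_of_subset_right (fun y hy => Set.mem_Iic.2 (Set.mem_Icc.1 hy).2)]
    rw [hS, Set.mem_setOf_eq, this]
    exact hM)
  refine ⟨t, by linarith, ?_⟩
  intro η hη
  have hupper : 0 < μ' (Set.Iic (t+η)) := by
    obtain ⟨x, hxS, hxlt⟩ := exists_lt_of_csInf_lt hSne (show sInf S < t + η by rw [← ht]; linarith)
    exact lt_of_lt_of_le hxS (measure_mono (Set.Iic_subset_Iic.2 (le_of_lt hxlt)))
  have hlower : μ' (Set.Iic (t-η)) = 0 := by
    have : t - η ∉ S := notMem_of_lt_csInf (by rw [← ht]; linarith) hSbdd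
    rw [hS, Set.mem_setOf_eq] at this
    exact le_antisymm (not_lt.1 this) (zero_le)
  have hsplit : μ' (Set.Iic (t+η)) = μ' (Set.Iic (t-η)) + μ' (Set.Ioc (t-η) (t+η)) := by
    rw [← Set.Iic_union_Ioc_eq_Iic (show t-η ≤ t+η by linarith)]
    exact measure_union (Set.Iic_disjoint_Ioc le_rfl) measurableSet_Ioc
  have hIoc : 0 < μ' (Set.Ioc (t-η) (t+η)) := by
    rw [hsplit, hlower, zero_add] at hupper
    exact hupper
  calc (0:ℝ≥0∞) < μ' (Set.Ioc (t-η) (t+η)) := hIoc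
    _ ≤ ν (Set.Ioc (t-η) (t+η)) := Measure.restrict_le_self _
    _ ≤ ν (Set.Icc (t-η) (t+η)) := measure_mono Set.Ioc_subset_Icc_self

lemma approx_comb (γ t : ℝ) (ht : t ≠ 0) (hξ : 0 ≤ γ / (-t)) (ε : ℝ) (hε : 0 < ε) :
    ∃ K jj : ℕ, 2 ≤ K ∧ |(K:ℝ)*γ + (jj:ℝ)*t| ≤ ε := by
  set ξ := γ / (-t) with hξdef
  have htabs : 0 < |t| := abs_pos.2 ht
  set N : ℕ := max 1 ⌈2*|t|/ε⌉₊ with hN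
  have hNpos : 0 < N := lt_of_lt_of_le one_pos (le_max_left _ _)
  obtain ⟨j, k, hk0, hkN, hjk⟩ := Real.exists_int_int_abs_mul_sub_le ξ hNpos
  have hbound : 2*|t|/((N:ℝ)+1) ≤ ε := by
    have h1 : 2*|t|/ε ≤ ⌈2*|t|/ε⌉₊ := Nat.le_ceil _
    have h2 : (⌈2*|t|/ε⌉₊ : ℝ) ≤ N := by exact_mod_cast Nat.cast_le.2 (le_max_right _ _)
    rw [div_le_iff₀ (by positivity)]
    rw [div_le_iff₀ hε] at h1
    nlinarith
  have hj0 : 0 ≤ j := by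
    by_contra hjneg
    push_neg at hjneg
    have hj1 : (j:ℝ) ≤ -1 := by exact_mod_cast Int.le_of_lt_add_one (by simpa using hjneg)
    have hkξ : 0 ≤ (k:ℝ) * ξ := mul_nonneg (by exact_mod_cast le_of_lt hk0) hξ
    have habs := (abs_le.1 hjk).2
    have hN1 : (1:ℝ) ≤ (N:ℝ) := by exact_mod_cast hNpos
    have h1N : 1/((N:ℝ)+1) ≤ 1/2 := by
      rw [div_le_div_iff₀ (by positivity) (by norm_num)]
      linarith
    linarith
  have hγ : γ = -t * ξ := by
    rw [hξdef]
    field_simp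
  have hkey : ∀ a b : ℝ, a*γ + b*t = -t*(a*ξ - b) := by
    intro a b
    rw [hγ]; ring
  refine ⟨2*k.toNat, 2*j.toNat, ?_, ?_⟩
  · have : 1 ≤ k.toNat := by omega
    omega
  · have hkcast : ((2*k.toNat : ℕ) : ℝ) = 2*(k:ℝ) := by
      have hk' : ((k.toNat:ℕ):ℝ) = (k:ℝ) := by
        exact_mod_cast Int.toNat_of_nonneg (le_of_lt hk0)
      push_cast [hk']
      ring
    have hjcast : ((2*j.toNat : ℕ) : ℝ) = 2*(j:ℝ) := by
      have hj' : ((j.toNat:ℕ):ℝ) = (j:ℝ) := by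
        exact_mod_cast Int.toNat_of_nonneg hj0
      push_cast [hj']
      ring
    rw [hkcast, hjcast]
    have : 2*(k:ℝ)*γ + 2*(j:ℝ)*t = -t*(2*((k:ℝ)*ξ - j)) := by rw [hγ]; ring
    rw [this, abs_mul, abs_mul, abs_neg]
    have habs2 : |(2:ℝ)| = 2 := by norm_num
    rw [habs2]
    calc |t| * (2 * |(k:ℝ)*ξ - j|) ≤ |t| * (2 * (1/((N:ℝ)+1))) := by
          apply mul_le_mul_of_nonneg_left _ (abs_nonneg t)
          apply mul_le_mul_of_nonneg_left _ (by norm_num)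
          exact hjk
      _ = 2*|t|/((N:ℝ)+1) := by ring
      _ ≤ ε := hbound

lemma mass_both (F : Measure ℝ) [IsProbabilityMeasure F] (hint : Integrable (fun x => x) F)
    (hmean : ∫ x, x ∂F = 0) (hne : 0 < F {x : ℝ | x ≠ 0}) :
    0 < F (Set.Iio 0) ∧ 0 < F (Set.Ioi 0) := by
  constructor
  · by_contra hc
    push_neg at hc
    have h0 : F (Set.Iio 0) = 0 := le_antisymm (by simpa using hc) (zero_le)
    have hae : ∀ᵐ x ∂F, 0 ≤ x := by
      rw [ae_iff]
      have hset : {x : ℝ | ¬ (0:ℝ) ≤ x} = Set.Iio 0 := by ext x; simp [not_le]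
      rw [hset]; exact h0
    have hle : (0:ℝ→ℝ) ≤ᵐ[F] fun x => x := hae.mono fun x hx => by simpa using hx
    have hzero := (integral_eq_zero_iff_of_nonneg_ae hle hint).1 hmean
    have hz : F {x : ℝ | x ≠ 0} = 0 := by
      have h' : ∀ᵐ x ∂F, x = 0 := hzero.mono fun x hx => by simpa using hx
      exact ae_iff.1 h'
    exact absurd hz (ne_of_gt hne)
  · by_contra hc
    push_neg at hc
    have h0 : F (Set.Ioi 0) = 0 := le_antisymm (by simpa using hc) (zero_le)
    have hae : ∀ᵐ x ∂F, 0 ≤ -x := by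
      rw [ae_iff]
      have hset : {x : ℝ | ¬ (0:ℝ) ≤ -x} = Set.Ioi 0 := by
        ext x; simp [not_le]
      rw [hset]; exact h0
    have hle : (0:ℝ→ℝ) ≤ᵐ[F] fun x => -x := hae.mono fun x hx => by simpa using hx
    have hzero := (integral_eq_zero_iff_of_nonneg_ae hle hint.neg).1
      (by rw [integral_neg, hmean, neg_zero])
    have hz : F {x : ℝ | x ≠ 0} = 0 := by
      have h' : ∀ᵐ x ∂F, x = 0 := hzero.mono fun x hx => by
        have : -x = 0 := by simpa using hx
        linarith
      exact ae_iff.1 h'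
    exact absurd hz (ne_of_gt hne)

lemma exists_support_point_pos (ν : Measure ℝ) [IsFiniteMeasure ν] (hpos : 0 < ν (Set.Ioi 0))
    (hsp : ∀ (μ : Measure ℝ), IsFiniteMeasure μ → 0 < μ (Set.Iio 0) →
      ∃ t : ℝ, t < 0 ∧ ∀ η > 0, 0 < μ (Set.Icc (t-η) (t+η))) :
    ∃ t : ℝ, 0 < t ∧ ∀ η > 0, 0 < ν (Set.Icc (t-η) (t+η)) := by
  set ν' := Measure.map (fun x : ℝ => -x) ν with hν'
  haveI : IsFiniteMeasure ν' := by
    constructor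
    rw [hν', Measure.map_apply measurable_neg MeasurableSet.univ]
    exact measure_lt_top ν _
  have hmap : ∀ s : Set ℝ, MeasurableSet s → ν' s = ν ((fun x : ℝ => -x) ⁻¹' s) := by
    intro s hs; rw [hν', Measure.map_apply measurable_neg hs]
  have hpos' : 0 < ν' (Set.Iio 0) := by
    rw [hmap _ measurableSet_Iio]
    have : (fun x : ℝ => -x) ⁻¹' (Set.Iio 0) = Set.Ioi 0 := by
      ext x; simp
    rwa [this]
  obtain ⟨t', ht'0, ht's⟩ := hsp ν' ‹_› hpos'
  refine ⟨-t', by linarith, ?_⟩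
  intro η hη
  have := ht's η hη
  rw [hmap _ measurableSet_Icc] at this
  have hpre : (fun x : ℝ => -x) ⁻¹' (Set.Icc (t'-η) (t'+η)) = Set.Icc (-t'-η) (-t'+η) := by
    ext x
    simp only [Set.mem_preimage, Set.mem_Icc]
    constructor <;> intro hx <;> constructor <;> linarith [hx.1, hx.2]
  rwa [hpre] at this

end CCaux

open CCaux in
/-- **Centering the continuous component by finite convolution.**
Let `X` have law `F` with mean `0`, and suppose `F` has a component `p₁ F₁` with `p₁ > 0`,
where `F₁` is supported on a compact interval `[a₁, a₂]` (`a₁ < a₂`) and is absolutely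
continuous with density bounded below by `c₁ > 0` on `[a₁, a₂]`. Then there exist a
positive integer `m`, a weight `p > 0`, a compact interval `[a, b]` with `a < 0 < b`, a
lower bound `c > 0` and a probability measure `ν`, absolutely continuous with density `≥ c`
on `[a, b]` and vanishing outside `[a, b]`, with mean `0`, such that `F^{*m} ≥ p ν`. -/
theorem exists_centered_continuous_component
    (F : Measure ℝ) (hFprob : IsProbabilityMeasure F)
    (hint : Integrable (fun x => x) F) (hmean : ∫ x, x ∂F = 0)
    (p₁ : ℝ) (hp₁ : 0 < p₁)
    (a₁ a₂ : ℝ) (ha : a₁ < a₂)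
    (F₁ : Measure ℝ) (hF₁prob : IsProbabilityMeasure F₁)
    (d₁ : ℝ → ℝ≥0∞) (hF₁ : F₁ = volume.withDensity d₁)
    (c₁ : ℝ) (hc₁ : 0 < c₁)
    (hd₁ : ∀ x ∈ Set.Icc a₁ a₂, ENNReal.ofReal c₁ ≤ d₁ x)
    (hd₁' : ∀ x ∉ Set.Icc a₁ a₂, d₁ x = 0)
    (hcomp : ENNReal.ofReal p₁ • F₁ ≤ F) :
    ∃ m : ℕ, 0 < m ∧ ∃ p : ℝ, 0 < p ∧ ∃ a b : ℝ, a < 0 ∧ 0 < b ∧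
      ∃ c : ℝ, 0 < c ∧ ∃ (ν : Measure ℝ) (d : ℝ → ℝ≥0∞),
        IsProbabilityMeasure ν ∧
        ν = volume.withDensity d ∧
        (∀ x ∈ Set.Icc a b, ENNReal.ofReal c ≤ d x) ∧
        (∀ x ∉ Set.Icc a b, d x = 0) ∧
        (∫ x, x ∂ν) = 0 ∧
        ENNReal.ofReal p • ν ≤
          Measure.map (fun ω : Fin m → ℝ => ∑ i, ω i) (Measure.pi fun _ : Fin m => F) := by
  classical
  set h : ℝ := (a₂ - a₁)/2 with hhdef
  set γ : ℝ := (a₁ + a₂)/2 with hγdef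
  have hhpos : 0 < h := by rw [hhdef]; linarith
  have hIcceq : Set.Icc a₁ a₂ = Set.Icc (γ - h) (γ + h) :=
    Icc_eq (by rw [hγdef, hhdef]; ring) (by rw [hγdef, hhdef]; ring)
  -- base component bound
  have hbase : ENNReal.ofReal c₁ • volume.restrict (Set.Icc (γ-h) (γ+h)) ≤ F₁ := by
    rw [← hIcceq, hF₁]
    have : ENNReal.ofReal c₁ • volume.restrict (Set.Icc a₁ a₂)
        = volume.withDensity ((Set.Icc a₁ a₂).indicator fun _ => ENNReal.ofReal c₁) := by
      rw [withDensity_indicator measurableSet_Icc, withDensity_const]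
    rw [this]
    apply withDensity_mono
    apply Filter.Eventually.of_forall
    intro x
    by_cases hx : x ∈ Set.Icc a₁ a₂
    · rw [Set.indicator_of_mem hx]; exact hd₁ x hx
    · rw [Set.indicator_of_notMem hx]; exact zero_le
  -- F₁ is carried by Icc a₁ a₂, and gives no mass to {0}
  have hF₁compl : F₁ (Set.Icc a₁ a₂)ᶜ = 0 := by
    rw [hF₁, withDensity_apply _ measurableSet_Icc.compl]
    rw [setLIntegral_congr_fun measurableSet_Icc.compl
      (fun x hx => hd₁' x hx)]
    simp
  have hF₁Icc : F₁ (Set.Icc a₁ a₂) = 1 := by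
    have hmac : F₁ (Set.Icc a₁ a₂) + F₁ (Set.Icc a₁ a₂)ᶜ = F₁ Set.univ :=
      measure_add_measure_compl (measurableSet_Icc (a := a₁) (b := a₂))
    rw [hF₁compl, add_zero, measure_univ] at hmac
    exact hmac
  have hF₁sing : F₁ {(0:ℝ)} = 0 := by
    rw [hF₁]
    exact withDensity_absolutelyContinuous volume d₁ Real.volume_singleton
  have hF₁diff : 1 ≤ F₁ (Set.Icc a₁ a₂ \ {0}) := by
    have hsub : Set.Icc a₁ a₂ ⊆ (Set.Icc a₁ a₂ \ {0}) ∪ {0} := by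
      intro x hx
      by_cases hx0 : x = (0:ℝ)
      · exact Or.inr (by simp [hx0])
      · exact Or.inl ⟨hx, by simp [hx0]⟩
    calc (1:ℝ≥0∞) = F₁ (Set.Icc a₁ a₂) := hF₁Icc.symm
      _ ≤ F₁ (Set.Icc a₁ a₂ \ {0}) + F₁ {0} :=
          le_trans (measure_mono hsub) (measure_union_le _ _)
      _ = F₁ (Set.Icc a₁ a₂ \ {0}) := by rw [hF₁sing, add_zero]
  have hne : 0 < F {x : ℝ | x ≠ 0} := by
    have h1 : ENNReal.ofReal p₁ * F₁ (Set.Icc a₁ a₂ \ {0}) ≤ F (Set.Icc a₁ a₂ \ {0}) := by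
      have := Measure.le_iff'.1 hcomp (Set.Icc a₁ a₂ \ {0})
      simpa [Measure.smul_apply, smul_eq_mul] using this
    have h2 : Set.Icc a₁ a₂ \ {0} ⊆ {x : ℝ | x ≠ 0} := fun x hx => by
      simpa using hx.2
    calc (0:ℝ≥0∞) < ENNReal.ofReal p₁ * 1 := by
          simp [ENNReal.ofReal_pos.2 hp₁]
      _ ≤ ENNReal.ofReal p₁ * F₁ (Set.Icc a₁ a₂ \ {0}) :=
          mul_le_mul_right hF₁diff _
      _ ≤ F (Set.Icc a₁ a₂ \ {0}) := h1
      _ ≤ F {x : ℝ | x ≠ 0} := measure_mono h2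
  obtain ⟨hIio, hIoi⟩ := mass_both F hint hmean hne
  -- choose a support point t of the appropriate sign
  have htex : ∃ t : ℝ, t ≠ 0 ∧ 0 ≤ γ / (-t) ∧ ∀ η > 0, 0 < F (Set.Icc (t-η) (t+η)) := by
    rcases le_or_gt 0 γ with hγ0 | hγ0
    · obtain ⟨t, ht0, hts⟩ := exists_support_point F hIio
      exact ⟨t, ne_of_lt ht0, div_nonneg hγ0 (by linarith), hts⟩
    · obtain ⟨t, ht0, hts⟩ := exists_support_point_pos F hIoi
        (fun μ hμ hp => by
          haveI := hμ
          exact exists_support_point μ hp)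
      refine ⟨t, ne_of_gt ht0, ?_, hts⟩
      have : γ / (-t) = (-γ) / t := by
        rw [div_neg, neg_div]
      rw [this]
      exact div_nonneg (by linarith) (le_of_lt ht0)
  obtain ⟨t, ht0, hξ, hsupp⟩ := htex
  obtain ⟨K, jj, hK2, hcenter⟩ := approx_comb γ t ht0 hξ (h/4) (by positivity)
  obtain ⟨K0, rfl⟩ : ∃ K0, K = K0 + 2 := ⟨K - 2, by omega⟩
  set η : ℝ := h/(4*((jj:ℝ)+1)) with hηdef
  have hηpos : 0 < η := by rw [hηdef]; positivity
  have hspread : (jj:ℝ)*η ≤ h/4 := by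
    have hexp : (jj:ℝ)*η = (jj:ℝ)*h/(4*((jj:ℝ)+1)) := by rw [hηdef]; ring
    rw [hexp, div_le_div_iff₀ (by positivity) (by norm_num)]
    nlinarith [mul_nonneg (Nat.cast_nonneg (α := ℝ) jj) hhpos.le]
  set J := Set.Icc (t-η) (t+η) with hJdef
  set β := F J with hβdef
  have hβpos : 0 < β := hsupp η hηpos
  have hβfin : β ≠ ∞ := measure_ne_top F J
  set ρ := β⁻¹ • F.restrict J with hρdef
  have hρJ : ρ J = 1 := by
    rw [hρdef, Measure.smul_apply, Measure.restrict_apply measurableSet_Icc, smul_eq_mul,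
      Set.inter_self]
    exact ENNReal.inv_mul_cancel (ne_of_gt hβpos) hβfin
  haveI hρprob : IsProbabilityMeasure ρ := by
    constructor
    rw [hρdef, Measure.smul_apply, Measure.restrict_apply_univ, smul_eq_mul]
    exact ENNReal.inv_mul_cancel (ne_of_gt hβpos) hβfin
  have hρle : β • ρ ≤ F := by
    rw [hρdef, smul_smul, ENNReal.mul_inv_cancel (ne_of_gt hβpos) hβfin, one_smul]
    exact Measure.restrict_le_self
  -- the convolution chain
  have hSm0 : (1:ℝ≥0∞) • Measure.dirac (0:ℝ) ≤ Sm F 0 := by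
    rw [Sm_zero, one_smul]
  have hch1 := chain F F₁ (ENNReal.ofReal p₁) ENNReal.ofReal_ne_top hcomp
    (Measure.dirac 0) 1 ENNReal.one_ne_top 0 hSm0 (K0+2)
  have hch2 := chain F ρ β hβfin hρle (convPow F₁ (K0+2) (Measure.dirac 0))
    (ENNReal.ofReal p₁ ^ (K0+2) * 1)
    (ENNReal.mul_ne_top (ENNReal.pow_ne_top ENNReal.ofReal_ne_top) ENNReal.one_ne_top)
    (K0+2+0) hch1 jj
  set cst := ENNReal.ofReal c₁ ^ (K0+2) * ENNReal.ofReal h ^ (K0+1) with hcstdef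
  have hwin := window F₁ γ h (ENNReal.ofReal c₁) ENNReal.ofReal_ne_top hbase K0
  have hsh := shift_chain ρ t η hρJ (convPow F₁ (K0+2) (Measure.dirac 0)) cst
    (((K0:ℝ)+2)*γ - h) (((K0:ℝ)+2)*γ + h) hwin jj
  set r : ℝ := h/2 with hrdef
  have hrpos : 0 < r := by rw [hrdef]; positivity
  set lo := ((K0:ℝ)+2)*γ - h + (jj:ℝ)*(t+η) with hlodef
  set hi := ((K0:ℝ)+2)*γ + h + (jj:ℝ)*(t-η) with hhidef
  have hcenter' : |((K0:ℝ)+2)*γ + (jj:ℝ)*t| ≤ h/4 := by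
    have : ((K0+2:ℕ):ℝ) = (K0:ℝ)+2 := by push_cast; ring
    rwa [this] at hcenter
  have hsub2 : Set.Icc (-r) r ⊆ Set.Icc lo hi := by
    obtain ⟨hc1, hc2⟩ := abs_le.1 hcenter'
    have hjjη : 0 ≤ (jj:ℝ)*η := mul_nonneg (Nat.cast_nonneg jj) (le_of_lt hηpos)
    apply Set.Icc_subset_Icc
    · rw [hlodef, hrdef]; nlinarith [hspread]
    · rw [hhidef, hrdef]; nlinarith [hspread]
  set q := β^jj * (ENNReal.ofReal p₁ ^ (K0+2) * 1) * cst with hqdef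
  have htotal : q • volume.restrict (Set.Icc (-r) r) ≤ Sm F (jj + (K0+2+0)) := by
    calc q • volume.restrict (Set.Icc (-r) r)
        ≤ q • volume.restrict (Set.Icc lo hi) :=
          smul_mono_meas (Measure.restrict_mono hsub2 le_rfl)
      _ = (β^jj * (ENNReal.ofReal p₁ ^ (K0+2) * 1)) • (cst • volume.restrict (Set.Icc lo hi)) := by
          rw [smul_smul, hqdef]
      _ ≤ (β^jj * (ENNReal.ofReal p₁ ^ (K0+2) * 1)) •
            convPow ρ jj (convPow F₁ (K0+2) (Measure.dirac 0)) := smul_mono_meas hsh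
      _ ≤ Sm F (jj + (K0+2+0)) := hch2
  -- facts about q
  have hq0 : q ≠ 0 := by
    rw [hqdef, hcstdef]
    apply mul_ne_zero
    apply mul_ne_zero
    · exact pow_ne_zero _ (ne_of_gt hβpos)
    · exact mul_ne_zero (pow_ne_zero _ (ne_of_gt (ENNReal.ofReal_pos.2 hp₁))) one_ne_zero
    · exact mul_ne_zero (pow_ne_zero _ (ne_of_gt (ENNReal.ofReal_pos.2 hc₁)))
        (pow_ne_zero _ (ne_of_gt (ENNReal.ofReal_pos.2 hhpos)))
  have hqfin : q ≠ ∞ := by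
    rw [hqdef, hcstdef]
    apply ENNReal.mul_ne_top
    apply ENNReal.mul_ne_top
    · exact ENNReal.pow_ne_top hβfin
    · exact ENNReal.mul_ne_top (ENNReal.pow_ne_top ENNReal.ofReal_ne_top) ENNReal.one_ne_top
    · exact ENNReal.mul_ne_top (ENNReal.pow_ne_top ENNReal.ofReal_ne_top)
        (ENNReal.pow_ne_top ENNReal.ofReal_ne_top)
  have hqtR : 0 < q.toReal := ENNReal.toReal_pos hq0 hqfin
  -- the final measure ν
  set d : ℝ → ℝ≥0∞ := (Set.Icc (-r) r).indicator (fun _ => ENNReal.ofReal (2*r)⁻¹) with hddef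
  set ν : Measure ℝ := volume.withDensity d with hνdef
  have hνeq : ν = ENNReal.ofReal (2*r)⁻¹ • volume.restrict (Set.Icc (-r) r) := by
    rw [hνdef, hddef, withDensity_indicator measurableSet_Icc, withDensity_const]
  have h2rpos : (0:ℝ) < 2*r := by linarith
  haveI hνprob : IsProbabilityMeasure ν := by
    constructor
    rw [hνeq, Measure.smul_apply, Measure.restrict_apply_univ, smul_eq_mul, Real.volume_Icc]
    rw [← ENNReal.ofReal_mul (by positivity)]
    rw [show (2*r)⁻¹ * (r - -r) = 1 by field_simp; ring]
    exact ENNReal.ofReal_one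
  have hνmean : (∫ x, x ∂ν) = 0 := by
    rw [hνeq, integral_smul_measure]
    have : (∫ x in Set.Icc (-r) r, x ∂volume) = 0 := by
      rw [MeasureTheory.integral_Icc_eq_integral_Ioc,
        ← intervalIntegral.integral_of_le (by linarith : -r ≤ r), integral_id]
      simp [neg_sq]
    rw [this, smul_zero]
  set p : ℝ := 2*r*q.toReal with hpdef
  have hppos : 0 < p := by rw [hpdef]; positivity
  refine ⟨jj + (K0+2+0), by omega, p, hppos, -r, r, by linarith, hrpos,
    (2*r)⁻¹, by positivity, ν, d, hνprob, hνdef, ?_, ?_, hνmean, ?_⟩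
  · intro x hx
    rw [hddef, Set.indicator_of_mem hx]
  · intro x hx
    rw [hddef, Set.indicator_of_notMem hx]
  · show ENNReal.ofReal p • ν ≤ Sm F (jj + (K0+2+0))
    have hkey : ENNReal.ofReal p • ν = q • volume.restrict (Set.Icc (-r) r) := by
      rw [hνeq, smul_smul, ← ENNReal.ofReal_mul (le_of_lt hppos)]
      rw [show p * (2*r)⁻¹ = q.toReal by rw [hpdef]; field_simp]
      rw [ENNReal.ofReal_toReal hqfin]
    rw [hkey]
    exact htotal
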